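/- Let q ≥ 1, N ≥ 0 be integers. The ℂ-linear map sending a polynomial p of degree < q(N+1) to the sequence of coefficients of the formal power series p(z)/(1-z^q)^{N+1} restricted to any set A ⊆ ℕ satisfying |A ∩ (j+qℤ)| ≥ N+1 for all 0 ≤ j < q, is injective. Equivalently: if p has degree < q(N+1) and the coefficient of z^k in p(z)/(1-z^q)^{N+1} vanishes for all k ∈ A, then p = 0. -/

import Mathlib

open Finset

private lemma fwdDiff_iter_zero (t : ℕ) : (fwdDiff (1:ℕ) : (ℕ → ℂ) → ℕ → ℂ)^[t] 0 = 0 := by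
  induction t with
  | zero => rfl
  | succ t ih =>
      rw [Function.iterate_succ_apply]
      have : fwdDiff (1:ℕ) (0 : ℕ → ℂ) = 0 := by funext n; simp [fwdDiff]
      rw [this, ih]

private lemma auxdiff (q N : ℕ) (hq : 1 ≤ q) (p : Polynomial ℂ)
    (hdeg : p.degree < (q * (N + 1) : ℕ)) (F : PowerSeries ℂ)
    (hF : F * (1 - PowerSeries.X ^ q) ^ (N + 1) = (p : PowerSeries ℂ))
    (j : ℕ) (hj : j < q) :
    (fwdDiff (1:ℕ))^[N+1] (fun m : ℕ => PowerSeries.coeff (R := ℂ) (j + q * m) F) = 0 := by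
  funext y
  rw [fwdDiff_iter_eq_sum_shift]
  have h1 : PowerSeries.coeff (R := ℂ) (j + q * (y + (N+1))) (F * (1 - PowerSeries.X ^ q) ^ (N + 1)) = 0 := by
    rw [hF, Polynomial.coeff_coe]
    apply Polynomial.coeff_eq_zero_of_degree_lt
    refine hdeg.trans_le ?_
    have : q * (N+1) ≤ j + q * (y + (N+1)) := by nlinarith
    exact_mod_cast this
  have h2 : ∑ m ∈ range (N+1+1), ((-1:ℂ)^(m+(N+1)) * ((N+1).choose m)) *
      PowerSeries.coeff (R := ℂ) (j + q*(y+m)) F = 0 := by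
    rw [← h1, sub_pow, Finset.mul_sum, map_sum]
    apply Finset.sum_congr rfl
    intro m hm
    rw [Finset.mem_range] at hm
    have hm' : m ≤ N+1 := by omega
    have e1 : F * ((-1:PowerSeries ℂ)^(m+(N+1)) * 1^m * (PowerSeries.X^q)^(N+1-m) * (((N+1).choose m : ℕ) : PowerSeries ℂ)) =
        PowerSeries.C (R := ℂ) ((-1:ℂ)^(m+(N+1)) * ((N+1).choose m)) * (F * PowerSeries.X^(q*(N+1-m))) := by
      rw [← pow_mul, map_mul, map_pow, map_neg, map_one, map_natCast]
      ring
    rw [e1, PowerSeries.coeff_C_mul, PowerSeries.coeff_mul_X_pow']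
    have hle : q*(N+1-m) ≤ j + q*(y+(N+1)) := by
      calc q*(N+1-m) ≤ q*(y+(N+1)) := Nat.mul_le_mul_left q (by omega)
        _ ≤ j + q*(y+(N+1)) := Nat.le_add_left _ _
    rw [if_pos hle]
    congr 2
    have h3 : q*(y+(N+1)) = q*(y+m) + q*(N+1-m) := by rw [← Nat.mul_add]; congr 1; omega
    rw [h3, ← Nat.add_assoc, Nat.add_sub_cancel]
  rw [show ((0:ℕ→ℂ) y) = (0:ℂ) from rfl, ← h2]
  apply Finset.sum_congr rfl
  intro k hk
  rw [Finset.mem_range] at hk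
  have hsign : ((-1:ℂ))^(k+(N+1)) = ((-1:ℂ))^(N+1-k) := by
    rw [show k+(N+1) = (N+1-k) + 2*k by omega, pow_add, pow_mul]
    simp
  rw [zsmul_eq_mul]
  push_cast
  rw [hsign]
  ring_nf

theorem stmt15 (q N : ℕ) (hq : 1 ≤ q) (A : Set ℕ)
    (hA : ∀ j < q, (N + 1 : ℕ∞) ≤ {k | k ∈ A ∧ k % q = j}.encard)
    (p : Polynomial ℂ) (hdeg : p.degree < (q * (N + 1) : ℕ))
    (F : PowerSeries ℂ)
    (hF : F * (1 - PowerSeries.X ^ q) ^ (N + 1) = (p : PowerSeries ℂ))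
    (hvan : ∀ k ∈ A, PowerSeries.coeff (R := ℂ) k F = 0) :
    p = 0 := by
  classical
  have hcoeff : ∀ k : ℕ, PowerSeries.coeff (R := ℂ) k F = 0 := by
    intro k
    set j := k % q with hjdef
    have hj : j < q := Nat.mod_lt _ hq
    set f : ℕ → ℂ := fun m => PowerSeries.coeff (R := ℂ) (j + q * m) F with hfdef
    have hdiff : (fwdDiff (1:ℕ))^[N+1] f = 0 := auxdiff q N hq p hdeg F hF j hj
    set D : ℕ → ℂ := fun t => (fwdDiff (1:ℕ))^[t] f 0 with hDdef
    have hDzero : ∀ t, N+1 ≤ t → D t = 0 := by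
      intro t ht
      have : (fwdDiff (1:ℕ))^[t] f = 0 := by
        rw [show t = (t-(N+1)) + (N+1) by omega, Function.iterate_add_apply, hdiff,
          fwdDiff_iter_zero]
      simp [hDdef, this]
    have hnewton : ∀ n : ℕ, f n = ∑ t ∈ range (N+1), (n.choose t : ℂ) * D t := by
      intro n
      have h := shift_eq_sum_fwdDiff_iter (1:ℕ) f n 0
      simp only [zero_add, smul_eq_mul, mul_one, nsmul_eq_mul] at h
      rw [h]
      rcases le_or_gt n N with hn | hn
      · apply Finset.sum_subset (Finset.range_subset_range.mpr (by omega))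
        intro t _ ht
        rw [Finset.mem_range, not_lt] at ht
        rw [Nat.choose_eq_zero_of_lt (by omega)]
        simp
      · symm
        apply Finset.sum_subset (Finset.range_subset_range.mpr (by omega))
        intro t _ ht
        rw [Finset.mem_range, not_lt] at ht
        rw [hDzero t (by omega)]
        simp
    set P : Polynomial ℂ :=
      ∑ t ∈ range (N+1), Polynomial.C (D t / (t.factorial : ℂ)) * descPochhammer ℂ t with hPdef
    have hPeval : ∀ n : ℕ, P.eval (n:ℂ) = f n := by
      intro n
      rw [hnewton n, hPdef, Polynomial.eval_finset_sum]
      apply Finset.sum_congr rfl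
      intro t _
      rw [Polynomial.eval_mul, Polynomial.eval_C, descPochhammer_eval_eq_descFactorial,
        Nat.descFactorial_eq_factorial_mul_choose]
      have hfac : ((t.factorial : ℕ):ℂ) ≠ 0 := Nat.cast_ne_zero.mpr (Nat.factorial_ne_zero t)
      push_cast
      field_simp
    have hPdeg : P.natDegree < N+1 := by
      have : P.natDegree ≤ N := by
        apply Polynomial.natDegree_sum_le_of_forall_le
        intro t ht
        rw [Finset.mem_range] at ht
        refine (Polynomial.natDegree_C_mul_le _ _).trans ?_
        rw [descPochhammer_natDegree]
        omega
      omega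
    have hP0 : P = 0 := by
      obtain ⟨T, hTsub, hTcard⟩ := Set.exists_subset_encard_eq (hA j hj)
      have hTcard' : T.encard = ((N+1 : ℕ) : ℕ∞) := by rw [hTcard]; push_cast; ring
      have hTfin : T.Finite := Set.finite_of_encard_eq_coe hTcard'
      have hscard : hTfin.toFinset.card = N+1 := by
        have := hTfin.encard_eq_coe_toFinset_card
        rw [hTcard'] at this
        exact_mod_cast this.symm
      set s' : Finset ℂ := hTfin.toFinset.image (fun k => ((k / q : ℕ) : ℂ)) with hs'def
      have hinj : Set.InjOn (fun k => ((k / q : ℕ) : ℂ)) hTfin.toFinset := by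
        intro a ha b hb hab
        simp only [Finset.mem_coe, Set.Finite.mem_toFinset] at ha hb
        have ha' : a % q = j := (hTsub ha).2
        have hb' : b % q = j := (hTsub hb).2
        have hdq : a / q = b / q := Nat.cast_injective hab
        have e1 := Nat.div_add_mod a q
        have e2 := Nat.div_add_mod b q
        rw [hdq, ha'] at e1
        rw [hb'] at e2
        exact e1.symm.trans e2
      have hs'card : s'.card = N+1 := by
        rw [hs'def, Finset.card_image_of_injOn hinj, hscard]
      apply Polynomial.eq_zero_of_natDegree_lt_card_of_eval_eq_zero' P s'
      · intro x hx
        rw [hs'def] at hx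
        obtain ⟨a, ha, rfl⟩ := Finset.mem_image.mp hx
        simp only [Set.Finite.mem_toFinset] at ha
        have ha1 : a ∈ A := (hTsub ha).1
        have ha2 : a % q = j := (hTsub ha).2
        rw [hPeval]
        have hja : j + q * (a / q) = a := by rw [← ha2]; exact Nat.mod_add_div a q
        show PowerSeries.coeff (R := ℂ) (j + q * (a / q)) F = 0
        rw [hja]
        exact hvan a ha1
      · rw [hs'card]; exact hPdeg
    have hfk : f (k / q) = 0 := by rw [← hPeval, hP0, Polynomial.eval_zero]
    have hjk : j + q * (k / q) = k := by rw [hjdef]; exact Nat.mod_add_div k q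
    rw [← hjk]
    exact hfk
  have hF0 : F = 0 := PowerSeries.ext fun n => by simpa using hcoeff n
  have : (p : PowerSeries ℂ) = 0 := by rw [← hF, hF0, zero_mul]
  exact_mod_cast Polynomial.coe_eq_zero_iff.mp this
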